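/- arXiv:1503.06935 — 4 statements merged into one kernel-verified Lean document; each statement's English description precedes it below -/
import Mathlib

section
/- Let Γ be an infinite torsion-free group that is finitely generated, residually finite, and co-Hopfian. Let φ: Γ → Γ be an endomorphism whose image has finite index in Γ. Then φ is an automorphism of Γ. -/
private lemma aux_finite_hom {G Q : Type*} [Group G] [Group Q] [Finite Q]
    (hfg : Group.FG G) : Finite (G →* Q) := by
  obtain ⟨S, hSclos, hSfin⟩ := Group.fg_iff.mp hfg
  haveI : Finite S := hSfin
  have hinj : Function.Injective fun (f : G →* Q) => S.restrict f := by
    intro f g h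
    ext x
    have hle : Subgroup.closure S ≤ f.eqLocus g :=
      (Subgroup.closure_le _).2 (fun y hy => congrFun h ⟨y, hy⟩)
    rw [hSclos] at hle
    exact hle (Subgroup.mem_top x)
  exact Finite.of_injective _ hinj

/-- Let `Γ` be an infinite torsion-free group that is finitely generated, residually finite,
and co-Hopfian. Let `φ : Γ → Γ` be an endomorphism whose image has finite index in `Γ`.
Then `φ` is an automorphism of `Γ`. -/
theorem stmt_2 {Γ : Type*} [Group Γ]
    (hΓinf : Infinite Γ) (hΓtf : ∀ g : Γ, g ≠ 1 → ¬IsOfFinOrder g)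
    (hfg : Group.FG Γ)
    (hresfin : ∀ γ : Γ, γ ≠ 1 → ∃ H : Subgroup Γ, H.FiniteIndex ∧ γ ∉ H)
    (hcoHopf : ∀ ψ : Γ →* Γ, Function.Injective ψ → Function.Surjective ψ)
    (φ : Γ →* Γ) (hφ : φ.range.FiniteIndex) :
    Function.Bijective φ := by
  classical
  have hd0 : φ.range.index ≠ 0 := hφ.index_ne_zero
  suffices hinj : Function.Injective φ from ⟨hinj, hcoHopf φ hinj⟩
  by_contra hni
  obtain ⟨a, b, hab, hne⟩ := Function.not_injective_iff.mp hni
  set k := a * b⁻¹ with hk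
  have hφk : φ k = 1 := by rw [hk, map_mul, map_inv, hab, mul_inv_cancel]
  have hk1 : k ≠ 1 := by
    intro h; exact hne (by rwa [hk, mul_inv_eq_one] at h)
  have hpow : ∀ t : ℕ, t ≠ 0 → k ^ t ≠ 1 := by
    intro t ht h1
    exact hΓtf k hk1 (isOfFinOrder_iff_pow_eq_one.mpr ⟨t, Nat.pos_of_ne_zero ht, h1⟩)
  -- choose separating finite-index subgroups for the powers k^1, ..., k^d
  have hH : ∀ t : Fin φ.range.index, ∃ H : Subgroup Γ,
      H.FiniteIndex ∧ k ^ ((t : ℕ) + 1) ∉ H :=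
    fun t => hresfin _ (hpow _ (Nat.succ_ne_zero _))
  choose H hHfi hHnot using hH
  -- the finite-index, φ-invariant subgroup D
  let D : Subgroup Γ :=
    ⨅ t : Fin φ.range.index, ⨅ h : Γ →* Equiv.Perm (Γ ⧸ H t), h.ker
  have hDfi : D.FiniteIndex := by
    apply Subgroup.finiteIndex_iInf
    intro t
    haveI := hHfi t
    haveI : Finite (Γ →* Equiv.Perm (Γ ⧸ H t)) := aux_finite_hom hfg
    exact Subgroup.finiteIndex_iInf fun h => inferInstance
  have hDinv : ∀ x ∈ D, φ x ∈ D := by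
    intro x hx
    rw [Subgroup.mem_iInf] at hx ⊢
    intro t
    rw [Subgroup.mem_iInf]
    intro h
    have := Subgroup.mem_iInf.mp (hx t) (h.comp φ)
    simpa [MonoidHom.mem_ker] using this
  -- membership of deep powers of k in D is impossible
  have hkey : ∀ t : Fin φ.range.index, k ^ ((t : ℕ) + 1) ∉ D := by
    intro t hmem
    have hker : k ^ ((t : ℕ) + 1) ∈ (MulAction.toPermHom Γ (Γ ⧸ H t)).ker :=
      Subgroup.mem_iInf.mp (Subgroup.mem_iInf.mp hmem t) (MulAction.toPermHom Γ (Γ ⧸ H t))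
    have : k ^ ((t : ℕ) + 1) ∈ H t := by
      have h1 : k ^ ((t : ℕ) + 1) ∈ (H t).normalCore := by
        rw [Subgroup.normalCore_eq_ker]; exact hker
      exact (H t).normalCore_le h1
    exact hHnot t this
  -- P = φ⁻¹(D)
  let P : Subgroup Γ := D.comap φ
  have hDP : D ≤ P := fun x hx => by
    rw [Subgroup.mem_comap]; exact hDinv x hx
  have hrel : D.relIndex P * P.index = D.index := Subgroup.relIndex_mul_index hDP
  have hDne : D.index ≠ 0 := hDfi.index_ne_zero
  have hPne : P.index ≠ 0 := fun h => hDne (by rw [← hrel, h, mul_zero])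
  -- upper bound : D.relIndex P ≤ index of range
  have hPidx : P.index = D.relIndex φ.range := Subgroup.index_comap D φ
  have h1 : (D ⊓ φ.range).relIndex φ.range * φ.range.index = (D ⊓ φ.range).index :=
    Subgroup.relIndex_mul_index inf_le_right
  have h2 : (D ⊓ φ.range).relIndex φ.range = D.relIndex φ.range :=
    Subgroup.inf_relIndex_right D φ.range
  have hdvd : D.index ∣ P.index * φ.range.index := by
    rw [hPidx, ← h2, h1]
    exact Subgroup.index_dvd_of_le inf_le_left
  have hmuldvd : D.relIndex P * P.index ∣ P.index * φ.range.index := by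
    rw [hrel]; exact hdvd
  have hreldvd : D.relIndex P ∣ φ.range.index := by
    rw [mul_comm P.index] at hmuldvd
    exact (Nat.mul_dvd_mul_iff_right (Nat.pos_of_ne_zero hPne)).mp hmuldvd
  have hupper : D.relIndex P ≤ φ.range.index :=
    Nat.le_of_dvd (Nat.pos_of_ne_zero hd0) hreldvd
  -- lower bound : the powers of k give d+1 distinct cosets of D in P
  have hkP : ∀ i : ℕ, k ^ i ∈ P := by
    intro i
    rw [Subgroup.mem_comap, map_pow, hφk, one_pow]
    exact D.one_mem
  have hsep : ∀ {m n : ℕ}, m < n → n ≤ φ.range.index → (k ^ m)⁻¹ * k ^ n ∈ D → False := by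
    intro m n hmn hnle hmem
    have hpowm : (k ^ m)⁻¹ * k ^ n = k ^ (n - m) := by
      rw [inv_mul_eq_iff_eq_mul, ← pow_add, Nat.add_sub_cancel' (le_of_lt hmn)]
    have htlt : n - m - 1 < φ.range.index := by omega
    have hexp : ((⟨n - m - 1, htlt⟩ : Fin φ.range.index) : ℕ) + 1 = n - m := by
      simp; omega
    apply hkey ⟨n - m - 1, htlt⟩
    rw [hexp, ← hpowm]
    exact hmem
  haveI := hDfi
  haveI : (D.subgroupOf P).FiniteIndex := Subgroup.instFiniteIndex_subgroupOf D P
  haveI : Finite (↥P ⧸ D.subgroupOf P) := Subgroup.finite_quotient_of_finiteIndex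
  have hinj2 : Function.Injective
      (fun i : Fin (φ.range.index + 1) =>
        (QuotientGroup.mk ⟨k ^ (i : ℕ), hkP i⟩ : ↥P ⧸ D.subgroupOf P)) := by
    intro i j hij
    by_contra hne2
    have hij' : ∀ {i j : Fin (φ.range.index + 1)},
        (QuotientGroup.mk ⟨k ^ (i : ℕ), hkP i⟩ : ↥P ⧸ D.subgroupOf P) =
          QuotientGroup.mk ⟨k ^ (j : ℕ), hkP j⟩ → (i : ℕ) < (j : ℕ) → False := by
      intro i j hij hlt
      have hmem := QuotientGroup.eq.mp hij
      rw [Subgroup.mem_subgroupOf] at hmem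
      have hcoe : (((⟨k ^ (i : ℕ), hkP i⟩ : ↥P)⁻¹ * ⟨k ^ (j : ℕ), hkP j⟩ : ↥P) : Γ)
          = (k ^ (i : ℕ))⁻¹ * k ^ (j : ℕ) := rfl
      rw [hcoe] at hmem
      exact hsep hlt (by omega) hmem
    rcases Nat.lt_or_ge (i : ℕ) (j : ℕ) with hlt | hge
    · exact hij' hij hlt
    · have hlt : (j : ℕ) < (i : ℕ) := by
        rcases Nat.lt_or_ge (j : ℕ) (i : ℕ) with h | h
        · exact h
        · exact absurd (Fin.ext (Nat.le_antisymm h hge)) hne2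
      exact hij' hij.symm hlt
  have hcard := Nat.card_le_card_of_injective _ hinj2
  rw [Nat.card_eq_fintype_card, Fintype.card_fin] at hcard
  have hQcard : Nat.card (↥P ⧸ D.subgroupOf P) = D.relIndex P :=
    (Subgroup.index_eq_card _).symm
  omega
end

section
/- Let Γ be an infinite group in which every non-trivial normal subgroup has finite index, and let Λ be an infinite torsion-free F-co-Hopfian group. Let φ: Γ → Λ be a group homomorphism such that the image φ(Γ) has finite index in Λ. Then φ is injective, the subgroup φ(Γ) is a finite-index subgroup of Λ isomorphic to Γ, and every finite-index subgroup Λ₁ of Λ that is isomorphic to Γ satisfies [Λ:Λ₁] = [Λ:φ(Γ)]. In particular the minimal index δ(Γ,Λ) equals [Λ:φ(Γ)]. -/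
/-- Let `Γ` be an infinite group in which every non-trivial normal subgroup has finite index,
and let `Λ` be an infinite torsion-free F-co-Hopfian group.  Let `φ : Γ → Λ` be a group
homomorphism whose image has finite index in `Λ`.  Then `φ` is injective, its range is a
finite-index subgroup of `Λ` isomorphic to `Γ`, every finite-index subgroup `Λ₁ ⊆ Λ`
isomorphic to `Γ` satisfies `[Λ:Λ₁] = [Λ:φ(Γ)]`, and the minimal index
`δ(Γ,Λ)` equals `[Λ:φ(Γ)]`. -/
theorem stmt_3 {Γ Λ : Type*} [Group Γ] [Group Λ]
    (hΓinf : Infinite Γ)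
    (hnorm : ∀ N : Subgroup Γ, N.Normal → N ≠ ⊥ → N.FiniteIndex)
    (hΛinf : Infinite Λ) (hΛtf : ∀ g : Λ, g ≠ 1 → ¬IsOfFinOrder g)
    (hFcoHopf : ∀ Λ₁ Λ₂ : Subgroup Λ, Λ₁.FiniteIndex → Λ₂.FiniteIndex →
      Nonempty (Λ₁ ≃* Λ₂) → Λ₁.index = Λ₂.index)
    (φ : Γ →* Λ) (hφ : φ.range.FiniteIndex) :
    Function.Injective φ ∧
    Nonempty (Γ ≃* φ.range) ∧
    (∀ Λ₁ : Subgroup Λ, Λ₁.FiniteIndex → Nonempty (Γ ≃* Λ₁) → Λ₁.index = φ.range.index) ∧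
    sInf {k : ℕ | ∃ Λ' : Subgroup Λ, Λ'.FiniteIndex ∧ Nonempty (Γ ≃* Λ') ∧ Λ'.index = k}
      = φ.range.index := by
  -- range is infinite
  have hrange_inf : Infinite φ.range := by
    rcases Nat.eq_zero_or_pos (Nat.card φ.range) with h0 | hpos
    · rcases Nat.card_eq_zero.mp h0 with h | h
      · exact absurd ⟨1⟩ (not_nonempty_iff.mpr h)
      · exact h
    · exfalso
      have hmul : Nat.card φ.range * φ.range.index = Nat.card Λ :=
        Subgroup.card_mul_index φ.range
      have : Nat.card Λ = 0 := Nat.card_eq_zero.mpr (Or.inr hΛinf)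
      rw [this] at hmul
      rcases Nat.mul_eq_zero.mp hmul with h | h
      · omega
      · exact hφ.index_ne_zero h
  -- injectivity
  have hinj : Function.Injective φ := by
    by_contra hni
    have hker : φ.ker ≠ ⊥ := by
      intro h
      exact hni ((MonoidHom.ker_eq_bot_iff φ).mp h)
    have hfi : φ.ker.FiniteIndex := hnorm φ.ker inferInstance hker
    have hfin : Finite (Γ ⧸ φ.ker) := by
      have : Nat.card (Γ ⧸ φ.ker) ≠ 0 := hfi.index_ne_zero
      exact Nat.finite_of_card_ne_zero this
    have : Finite φ.range := Finite.of_equiv _ (QuotientGroup.quotientKerEquivRange φ).toEquiv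
    exact not_finite φ.range
  have e : Γ ≃* φ.range := MonoidHom.ofInjective hinj
  have key : ∀ Λ₁ : Subgroup Λ, Λ₁.FiniteIndex → Nonempty (Γ ≃* Λ₁) →
      Λ₁.index = φ.range.index := by
    intro Λ₁ hΛ₁ ⟨e₁⟩
    exact hFcoHopf Λ₁ φ.range hΛ₁ hφ ⟨e₁.symm.trans e⟩
  refine ⟨hinj, ⟨e⟩, key, ?_⟩
  have hmem : φ.range.index ∈
      {k : ℕ | ∃ Λ' : Subgroup Λ, Λ'.FiniteIndex ∧ Nonempty (Γ ≃* Λ') ∧ Λ'.index = k} :=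
    ⟨φ.range, hφ, ⟨e⟩, rfl⟩
  refine le_antisymm (Nat.sInf_le hmem) ?_
  obtain ⟨Λ', hΛ', he', hk⟩ := Nat.sInf_mem ⟨_, hmem⟩
  rw [← hk, key Λ' hΛ' he']
end

section
/- Let N ≥ 1 and let A ∈ GL(N,ℝ) be an invertible real N×N matrix which has a complex eigenvalue z (i.e., a root z ∈ ℂ of the characteristic polynomial of A) with |z| ≠ 1. Then for any integers m, n with |m| ≠ |n|, the matrices A^m and A^n are not conjugate in GL(N,ℝ): there is no P ∈ GL(N,ℝ) with P A^m P⁻¹ = A^n. -/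
open Polynomial

lemma aux_mem_spectrum_iff {n : Type*} [Fintype n] [DecidableEq n]
    {K : Type*} [Field K] (M : Matrix n n K) (z : K) :
    z ∈ spectrum K M ↔ M.charpoly.IsRoot z := by
  rw [spectrum.mem_iff, Matrix.isUnit_iff_isUnit_det, isUnit_iff_ne_zero, not_not,
    IsRoot.def, Matrix.charpoly, eval_det, Matrix.matPolyEquiv_charmatrix]
  simp [Matrix.scalar_apply, algebraMap, Algebra.algebraMap]

lemma aux_spec_inv {A : Type*} [Ring A] [Algebra ℂ A] (V : Aˣ) :
    spectrum ℂ ((↑(V⁻¹) : A)) = Inv.inv '' spectrum ℂ (V : A) := by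
  ext w
  constructor
  · intro hw
    have hw0 : w ≠ 0 := by
      rintro rfl
      exact (spectrum.zero_notMem_iff ℂ |>.mpr (V⁻¹).isUnit) hw
    exact ⟨w⁻¹, spectrum.inv₀_mem_iff.mpr hw, inv_inv w⟩
  · rintro ⟨v, hv, rfl⟩
    exact spectrum.inv₀_mem_inv_iff.mpr hv

lemma aux_max_pow {t : ℝ} (ht : 0 < t) (k : ℕ) :
    max (t ^ k) (t⁻¹ ^ k) = max t t⁻¹ ^ k := by
  rcases le_total t 1 with h | h
  · have h1 : t ≤ t⁻¹ := h.trans (one_le_inv_iff₀.mpr ⟨ht, h⟩)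
    rw [max_eq_right h1, max_eq_right (pow_le_pow_left₀ ht.le h1 k)]
  · have h1 : t⁻¹ ≤ t := (inv_le_one_of_one_le₀ h).trans h
    rw [max_eq_left h1, max_eq_left (pow_le_pow_left₀ (inv_nonneg.mpr ht.le) h1 k)]

noncomputable def auxf : ℂ → ℝ := fun w => max ‖w‖ ‖w‖⁻¹

lemma auxf_zpow {w : ℂ} (hw : w ≠ 0) (m : ℤ) : auxf (w ^ m) = auxf w ^ m.natAbs := by
  have ht : 0 < ‖w‖ := norm_pos_iff.mpr hw
  obtain ⟨k, h | h⟩ : ∃ k : ℕ, m = k ∨ m = -k := ⟨m.natAbs, Int.natAbs_eq m⟩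
  all_goals subst h; simp only [auxf, Int.natAbs_neg, Int.natAbs_natCast]
  · rw [zpow_natCast, norm_pow, ← inv_pow, aux_max_pow ht]
  · rw [zpow_neg, zpow_natCast, norm_inv, norm_pow, inv_inv, ← inv_pow, max_comm,
      aux_max_pow ht]

set_option maxHeartbeats 1000000 in
/-- Let `A ∈ GL(N,ℝ)` have a complex eigenvalue `z` (a root of the characteristic
polynomial of `A` in `ℂ`) with `|z| ≠ 1`.  Then for any integers `m, n` with `|m| ≠ |n|`,
the matrices `A^m` and `A^n` are not conjugate in `GL(N,ℝ)`. -/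
theorem stmt_7 (N : ℕ) (hN : 1 ≤ N) (A : GL (Fin N) ℝ) (z : ℂ)
    (hz : (((A : Matrix (Fin N) (Fin N) ℝ).charpoly).map (algebraMap ℝ ℂ)).IsRoot z)
    (hz1 : ‖z‖ ≠ 1)
    (m n : ℤ) (hmn : |m| ≠ |n|) :
    ¬ ∃ P : GL (Fin N) ℝ, P * A ^ m * P⁻¹ = A ^ n := by
  rintro ⟨P, hP⟩
  haveI : Nonempty (Fin N) := Fin.pos_iff_nonempty.mp hN
  set φ : Matrix (Fin N) (Fin N) ℝ →+* Matrix (Fin N) (Fin N) ℂ :=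
    (algebraMap ℝ ℂ).mapMatrix with hφ
  set ψ : GL (Fin N) ℝ →* (Matrix (Fin N) (Fin N) ℂ)ˣ := Units.map φ.toMonoidHom with hψ
  set U : (Matrix (Fin N) (Fin N) ℂ)ˣ := ψ A with hU
  have hzT : z ∈ spectrum ℂ (U : Matrix (Fin N) (Fin N) ℂ) := by
    rw [aux_mem_spectrum_iff]
    have h1 : (U : Matrix (Fin N) (Fin N) ℂ)
        = ((A : Matrix (Fin N) (Fin N) ℝ)).map (algebraMap ℝ ℂ) := rfl
    rw [h1, Matrix.charpoly_map]
    exact hz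
  have hT0 : ∀ w ∈ spectrum ℂ (U : Matrix (Fin N) (Fin N) ℂ), w ≠ 0 := by
    intro w hw h0
    subst h0
    exact (spectrum.zero_notMem_iff ℂ |>.mpr U.isUnit) hw
  have hTfin : (spectrum ℂ (U : Matrix (Fin N) (Fin N) ℂ)).Finite := Matrix.finite_spectrum _
  have hTne : (spectrum ℂ (U : Matrix (Fin N) (Fin N) ℂ)).Nonempty := ⟨z, hzT⟩
  have key : ∀ k : ℤ, spectrum ℂ ((↑(U ^ k) : Matrix (Fin N) (Fin N) ℂ))
      = (fun w => w ^ k) '' spectrum ℂ (U : Matrix (Fin N) (Fin N) ℂ) := by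
    intro k
    rcases lt_trichotomy k 0 with hk | rfl | hk
    · have hk' : 0 < (-k).toNat := by omega
      have h1 : U ^ k = (U ^ (-k).toNat)⁻¹ := by
        rw [← zpow_natCast U, ← zpow_neg, Int.toNat_of_nonneg (by omega), neg_neg]
      rw [h1, aux_spec_inv, Units.val_pow_eq_pow_val,
        spectrum.map_pow_of_pos _ hk', Set.image_image]
      apply Set.image_congr
      intro w _
      show (w ^ (-k).toNat)⁻¹ = w ^ k
      rw [← zpow_natCast w, ← zpow_neg, Int.toNat_of_nonneg (by omega), neg_neg]
    · simp only [zpow_zero, Units.val_one]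
      rw [spectrum.one_eq]
      ext w
      simp only [Set.mem_singleton_iff, Set.mem_image]
      constructor
      · rintro rfl; exact ⟨z, hzT, by simp⟩
      · rintro ⟨v, hv, rfl⟩; simp
    · have h1 : U ^ k = U ^ k.toNat := by
        rw [← zpow_natCast U, Int.toNat_of_nonneg (by omega)]
      rw [h1, Units.val_pow_eq_pow_val, spectrum.map_pow_of_pos _ (by omega : 0 < k.toNat)]
      apply Set.image_congr
      intro w _
      show w ^ k.toNat = w ^ k
      rw [← zpow_natCast w, Int.toNat_of_nonneg (by omega)]
  obtain ⟨w₀, hw₀T, hw₀max⟩ := Set.Finite.exists_maximalFor auxf _ (Set.toFinite _) hTne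
  have hw₀le : ∀ w ∈ spectrum ℂ (U : Matrix (Fin N) (Fin N) ℂ), auxf w ≤ auxf w₀ := by
    intro w hw
    rcases le_total (auxf w) (auxf w₀) with h | h
    · exact h
    · exact hw₀max hw h
  have hz0 : z ≠ 0 := hT0 z hzT
  have habs : 0 < ‖z‖ := norm_pos_iff.mpr hz0
  have hfz : 1 < auxf z := by
    rcases lt_or_gt_of_ne hz1 with h | h
    · exact lt_max_of_lt_right (one_lt_inv_iff₀.mpr ⟨habs, h⟩)
    · exact lt_max_of_lt_left h
  have hw₀1 : 1 < auxf w₀ := lt_of_lt_of_le hfz (hw₀le z hzT)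
  have great : ∀ k : ℤ,
      IsGreatest (auxf '' spectrum ℂ ((↑(U ^ k) : Matrix (Fin N) (Fin N) ℂ)))
      (auxf w₀ ^ k.natAbs) := by
    intro k
    rw [key k]
    constructor
    · rw [Set.image_image]
      exact ⟨w₀, hw₀T, (auxf_zpow (hT0 _ hw₀T) k).symm ▸ rfl⟩
    · rintro x ⟨v, ⟨w, hw, rfl⟩, rfl⟩
      rw [auxf_zpow (hT0 w hw) k]
      exact pow_le_pow_left₀ (le_max_of_le_left (norm_nonneg w)) (hw₀le w hw) _
  have hspec : spectrum ℂ ((↑(U ^ m) : Matrix (Fin N) (Fin N) ℂ))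
      = spectrum ℂ ((↑(U ^ n) : Matrix (Fin N) (Fin N) ℂ)) := by
    have h2 : ψ P * U ^ m * (ψ P)⁻¹ = U ^ n := by
      rw [hU, ← map_zpow, ← map_inv, ← map_mul, ← map_mul, hP, map_zpow]
    calc spectrum ℂ ((↑(U ^ m) : Matrix (Fin N) (Fin N) ℂ))
        = spectrum ℂ ((ψ P : Matrix (Fin N) (Fin N) ℂ) * ↑(U ^ m) * ↑(ψ P)⁻¹) :=
          (spectrum.units_conjugate).symm
      _ = _ := by rw [← Units.val_mul, ← Units.val_mul, h2]
  have gn := great n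
  rw [← hspec] at gn
  have hpow : auxf w₀ ^ m.natAbs = auxf w₀ ^ n.natAbs := (great m).unique gn
  have habsmn : m.natAbs = n.natAbs := (pow_right_strictMono₀ hw₀1).injective hpow
  exact hmn (by rw [Int.abs_eq_natAbs, Int.abs_eq_natAbs, habsmn])
end

section
/- Let N ≥ 1 and let Λ be a subgroup of GL(N,ℝ) containing an element λ which has a complex eigenvalue z (i.e., a root z ∈ ℂ of the characteristic polynomial of λ) with |z| ≠ 1. Then Λ has infinitely many conjugacy classes. -/
open Polynomial Matrix

lemma my_charpoly_eval {n : Type*} [Fintype n] [DecidableEq n] {R : Type*} [CommRing R]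
    (A : Matrix n n R) (z : R) :
    A.charpoly.eval z = (Matrix.scalar n z - A).det := by
  unfold Matrix.charpoly
  rw [← Polynomial.coe_evalRingHom, RingHom.map_det]
  congr 1
  ext i j
  by_cases h : i = j <;>
    simp [Matrix.charmatrix_apply, h, Matrix.one_apply, Matrix.scalar_apply,
      Matrix.diagonal_apply]

lemma my_mem_spectrum_iff {n : Type*} [Fintype n] [DecidableEq n]
    (A : Matrix n n ℂ) (z : ℂ) :
    z ∈ spectrum ℂ A ↔ A.charpoly.IsRoot z := by
  rw [spectrum.mem_iff, Matrix.isUnit_iff_isUnit_det, isUnit_iff_ne_zero, not_not,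
    Polynomial.IsRoot, my_charpoly_eval]
  congr! 2

/-- Let `Λ` be a subgroup of `GL(N,ℝ)` containing an element `l` which has a complex
eigenvalue `z` (a root of the characteristic polynomial of `l` in `ℂ`) with `|z| ≠ 1`.
Then `Λ` has infinitely many conjugacy classes. -/
theorem stmt_8 (N : ℕ) (hN : 1 ≤ N) (Λ : Subgroup (GL (Fin N) ℝ))
    (l : GL (Fin N) ℝ) (hl : l ∈ Λ) (z : ℂ)
    (hz : (((l : Matrix (Fin N) (Fin N) ℝ).charpoly).map (algebraMap ℝ ℂ)).IsRoot z)
    (hz1 : ‖z‖ ≠ 1) :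
    Infinite (ConjClasses Λ) := by
  -- the monoid hom from Λ to complex matrices
  set ψ : GL (Fin N) ℝ →* (Matrix (Fin N) (Fin N) ℂ)ˣ :=
    Units.map ((algebraMap ℝ ℂ).mapMatrix.toMonoidHom) with hψ
  set χ : Λ →* Matrix (Fin N) (Fin N) ℂ :=
    (Units.coeHom _).comp (ψ.comp Λ.subtype) with hχ
  -- z is in the spectrum of χ ⟨l, hl⟩
  have hzspec : z ∈ spectrum ℂ (χ ⟨l, hl⟩) := by
    rw [my_mem_spectrum_iff]
    have : (χ ⟨l, hl⟩).charpoly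
        = ((l : Matrix (Fin N) (Fin N) ℝ).charpoly).map (algebraMap ℝ ℂ) := by
      simpa [hχ, hψ, RingHom.mapMatrix_apply] using
        Matrix.charpoly_map (l : Matrix (Fin N) (Fin N) ℝ) (algebraMap ℝ ℂ)
    rw [this]; exact hz
  -- find g ∈ Λ with an eigenvalue of modulus > 1
  obtain ⟨g, z', hz'spec, hz'⟩ :
      ∃ g : Λ, ∃ z' : ℂ, z' ∈ spectrum ℂ (χ g) ∧ 1 < ‖z'‖ := by
    rcases lt_or_gt_of_ne hz1 with h | h
    · have hz0 : z ≠ 0 := by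
        rintro rfl
        exact spectrum.zero_notMem ℂ ((ψ.comp Λ.subtype) ⟨l, hl⟩).isUnit hzspec
      refine ⟨⟨l, hl⟩⁻¹, z⁻¹, ?_, ?_⟩
      · have := (spectrum.inv_mem_iff (r := Units.mk0 z hz0)
          (a := ψ.comp Λ.subtype ⟨l, hl⟩)).mp hzspec
        simpa [hχ] using this
      · rw [norm_inv]
        rw [one_lt_inv_iff₀]
        exact ⟨norm_pos_iff.mpr hz0, h⟩
    · exact ⟨⟨l, hl⟩, z, hzspec, h⟩
  -- pick an eigenvalue of maximal modulus
  have hfin : (spectrum ℂ (χ g)).Finite := Matrix.finite_spectrum (χ g)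
  obtain ⟨w, hwmem, hwmax⟩ := Finset.exists_max_image hfin.toFinset (‖·‖)
    ⟨z', hfin.mem_toFinset.mpr hz'spec⟩
  rw [Set.Finite.mem_toFinset] at hwmem
  have hwmax' : ∀ v ∈ spectrum ℂ (χ g), ‖v‖ ≤ ‖w‖ := fun v hv =>
    hwmax v (hfin.mem_toFinset.mpr hv)
  have hw1 : 1 < ‖w‖ := lt_of_lt_of_le hz' (hwmax' z' hz'spec)
  -- key : comparison of powers
  have key : ∀ n m : ℕ, spectrum ℂ ((χ g) ^ (n + 1)) = spectrum ℂ ((χ g) ^ (m + 1)) →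
      m ≤ n := by
    intro n m hspec
    have h1 : w ^ (m + 1) ∈ spectrum ℂ ((χ g) ^ (n + 1)) := by
      rw [hspec, spectrum.map_pow_of_pos (χ g) (Nat.succ_pos m)]
      exact ⟨w, hwmem, rfl⟩
    rw [spectrum.map_pow_of_pos (χ g) (Nat.succ_pos n)] at h1
    obtain ⟨v, hv, hvw⟩ := h1
    have hvw' : v ^ (n + 1) = w ^ (m + 1) := hvw
    have : ‖w‖ ^ (m + 1) ≤ ‖w‖ ^ (n + 1) := by
      calc ‖w‖ ^ (m + 1) = ‖v‖ ^ (n + 1) := by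
            rw [← norm_pow, ← norm_pow, hvw']
        _ ≤ ‖w‖ ^ (n + 1) :=
            pow_le_pow_left₀ (norm_nonneg v) (hwmax' v hv) _
    exact Nat.succ_le_succ_iff.mp ((pow_le_pow_iff_right₀ hw1).mp this)
  -- the injection
  refine Infinite.of_injective (fun n : ℕ => ConjClasses.mk (g ^ (n + 1))) ?_
  intro n m hnm
  have hconj : IsConj (g ^ (n + 1)) (g ^ (m + 1)) := ConjClasses.mk_eq_mk_iff_isConj.mp hnm
  have hconj' : IsConj ((χ g) ^ (n + 1)) ((χ g) ^ (m + 1)) := by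
    simpa [map_pow] using χ.map_isConj hconj
  obtain ⟨c, hc⟩ := hconj'
  have hspec : spectrum ℂ ((χ g) ^ (n + 1)) = spectrum ℂ ((χ g) ^ (m + 1)) := by
    have h2 : (c : Matrix (Fin N) (Fin N) ℂ) * ((χ g) ^ (n + 1)) *
        ((c⁻¹ : (Matrix (Fin N) (Fin N) ℂ)ˣ) : Matrix (Fin N) (Fin N) ℂ)
        = (χ g) ^ (m + 1) := by
      rw [hc.eq, mul_assoc, Units.mul_inv, mul_one]
    rw [← h2, spectrum.units_conjugate]
  exact le_antisymm (key m n hspec.symm) (key n m hspec)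
end
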